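/- arXiv:1503.03497 — 2 statements merged into one kernel-verified Lean document; each statement's English description precedes it below -/
import Mathlib

section
/- Let N = m+n with m even, and let X' be the real orthogonal matrix with entries X'_{jk} = (cos(2πjk/N) + sin(2πjk/N))/√N. Let Q be obtained from X' by permuting columns so that the last m columns of Q are columns 1,…,m/2 and the last m/2 columns of X'. Then for every row j, the sum of squares of the last m entries of row j of Q equals m/(m+n). -/
open Real

theorem permuted_dft_rows_last_m_entries (m n : ℕ) (hm : 0 < m) (hn : 0 < n)
    (hme : Even m)
    (X' : Matrix (Fin (m + n)) (Fin (m + n)) ℝ)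
    (hX' : ∀ j k : Fin (m + n),
      X' j k = (Real.cos (2 * Real.pi * (j : ℕ) * (k : ℕ) / (m + n))
        + Real.sin (2 * Real.pi * (j : ℕ) * (k : ℕ) / (m + n))) / Real.sqrt (m + n))
    (Q : Matrix (Fin (m + n)) (Fin (m + n)) ℝ)
    -- the last m columns of Q are columns 1,…,m/2 and the last m/2 columns of X'
    (hQ : ∀ (j : Fin (m + n)) (i : Fin m),
      Q j ⟨n + i, by omega⟩ =
        if (i : ℕ) < m / 2 then X' j ⟨(i : ℕ) + 1, by omega⟩
        else X' j ⟨n + i, by omega⟩) :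
    ∀ j : Fin (m + n),
      ∑ i : Fin m, (Q j ⟨n + i, by omega⟩) ^ 2 = (m : ℝ) / (m + n) := by
  intro j
  obtain ⟨t, ht⟩ := hme
  have htm : m = t + t := by omega
  have ht2 : m / 2 = t := by omega
  have hNpos : (0:ℝ) < ((m + n : ℕ) : ℝ) := by positivity
  have hNne : ((m + n : ℕ) : ℝ) ≠ 0 := ne_of_gt hNpos
  set g : ℕ → ℝ := fun k =>
    (Real.cos (2 * Real.pi * (j : ℕ) * k / (m + n))
      + Real.sin (2 * Real.pi * (j : ℕ) * k / (m + n))) ^ 2 / ((m:ℝ) + (n:ℝ))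
    with hg
  -- each squared entry of X' is g of the column index
  have hXsq : ∀ k : Fin (m + n), (X' j k) ^ 2 = g (k : ℕ) := by
    intro k
    rw [hX' j k, div_pow, Real.sq_sqrt (by positivity : (0:ℝ) ≤ (m:ℝ)+(n:ℝ))]
  -- pairing lemma
  have hpair : ∀ k : ℕ, k ≤ m + n → g k + g (m + n - k) = 2 / ((m:ℝ) + (n:ℝ)) := by
    intro k hk
    have hcast : (((m + n - k : ℕ)) : ℝ) = ((m+n:ℕ):ℝ) - (k:ℝ) := by
      push_cast [Nat.cast_sub hk]; ring
    have harg : 2 * Real.pi * (j : ℕ) * (((m + n - k : ℕ)) : ℝ) / (m + n)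
        = (j : ℕ) * (2 * Real.pi) - 2 * Real.pi * (j : ℕ) * k / (m + n) := by
      rw [hcast]
      field_simp
      push_cast
      ring
    have h1 : Real.cos (2 * Real.pi * (j : ℕ) * (((m + n - k : ℕ)) : ℝ) / (m + n))
        = Real.cos (2 * Real.pi * (j : ℕ) * k / (m + n)) := by
      rw [harg, Real.cos_nat_mul_two_pi_sub]
    have h2 : Real.sin (2 * Real.pi * (j : ℕ) * (((m + n - k : ℕ)) : ℝ) / (m + n))
        = -Real.sin (2 * Real.pi * (j : ℕ) * k / (m + n)) := by
      rw [harg, Real.sin_nat_mul_two_pi_sub]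
    simp only [hg]
    rw [h1, h2]
    have := Real.sin_sq_add_cos_sq (2 * Real.pi * (j : ℕ) * k / (m + n))
    field_simp
    nlinarith [this]
  -- rewrite each term of the sum
  have hterm : ∀ i : Fin m, (Q j ⟨n + i, by omega⟩) ^ 2
      = g (if (i : ℕ) < t then (i : ℕ) + 1 else n + (i : ℕ)) := by
    intro i
    rw [hQ j i, ht2]
    split_ifs with h
    · exact hXsq ⟨(i : ℕ) + 1, by omega⟩
    · exact hXsq ⟨n + (i : ℕ), by omega⟩
  calc ∑ i : Fin m, (Q j ⟨n + i, by omega⟩) ^ 2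
      = ∑ i : Fin m, g (if (i : ℕ) < t then (i : ℕ) + 1 else n + (i : ℕ)) :=
        Finset.sum_congr rfl (fun i _ => hterm i)
    _ = ∑ i ∈ Finset.range m, g (if i < t then i + 1 else n + i) :=
        Fin.sum_univ_eq_sum_range (fun i => g (if i < t then i + 1 else n + i)) m
    _ = (m : ℝ) / ((m:ℝ)+(n:ℝ)) := by
        rw [htm, Finset.sum_range_add]
        have e1 : ∑ i ∈ Finset.range t, g (if i < t then i + 1 else n + i)
            = ∑ i ∈ Finset.range t, g (i + 1) := by
          apply Finset.sum_congr rfl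
          intro i hi
          rw [if_pos (Finset.mem_range.mp hi)]
        have e2 : ∑ i ∈ Finset.range t, g (if t + i < t then t + i + 1 else n + (t + i))
            = ∑ i ∈ Finset.range t, g (n + (t + i)) := by
          apply Finset.sum_congr rfl
          intro i hi
          rw [if_neg (by omega)]
        rw [e1, e2, ← Finset.sum_range_reflect (fun i => g (n + (t + i))) t,
          ← Finset.sum_add_distrib]
        have e3 : ∀ i ∈ Finset.range t, g (i + 1) + g (n + (t + (t - 1 - i)))
            = 2 / ((m:ℝ) + (n:ℝ)) := by
          intro i hi
          have hi' : i < t := Finset.mem_range.mp hi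
          have : n + (t + (t - 1 - i)) = m + n - (i + 1) := by omega
          rw [this]
          exact hpair (i + 1) (by omega)
        rw [Finset.sum_congr rfl e3, Finset.sum_const, Finset.card_range, nsmul_eq_mul]
        push_cast [htm]
        ring
end

section
/- Let H be a Hilbert space, P a bounded positive self-adjoint operator on H with ‖P‖ ≤ 1, whose kernel is infinite-dimensional, and suppose P has n orthonormal eigenvectors with eigenvalues in (1-σ, 1]. Let 0 < σ² ≤ ε < 1 and γ = (ε - σ²)/(1 - σ²). Then for every positive integer m with m ≤ nγ/(1-γ), there exist m+n orthonormal vectors Φ_1,…,Φ_{m+n} in H such that ‖PΦ_j - Φ_j‖² ≤ ε for all j. -/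
open scoped ComplexConjugate BigOperators

noncomputable section

lemma aux_exists_orthonormal {E : Type*} [NormedAddCommGroup E] [InnerProductSpace ℂ E]
    (h : ¬ FiniteDimensional ℂ E) (m : ℕ) : ∃ ψ : Fin m → E, Orthonormal ℂ ψ := by
  rcases Nat.eq_zero_or_pos m with rfl | hm
  · exact ⟨Fin.elim0, orthonormal_iff_ite.2 fun i => i.elim0⟩
  · haveI : NeZero m := ⟨hm.ne'⟩
    haveI : WellFoundedLT (Fin m) := Finite.to_wellFoundedLT
    have hrank : (m : Cardinal) ≤ Module.rank ℂ E := by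
      by_contra hlt
      exact h ((Module.rank_lt_aleph0_iff.mp ((not_le.1 hlt).trans (Cardinal.nat_lt_aleph0 m))))
    obtain ⟨f, hf⟩ := exists_linearIndependent_of_le_rank hrank
    exact ⟨InnerProductSpace.gramSchmidtNormed ℂ f, InnerProductSpace.gramSchmidtNormed_orthonormal (𝕜 := ℂ) (E := E) (ι := Fin m) hf⟩

lemma aux_fourier_sum (N : ℕ) (hN : 0 < N) (i j : Fin N) :
    ∑ k : Fin N, (conj ((Complex.exp (2 * Real.pi * Complex.I / N)) ^ (i.1 * k.1)) *
      (Complex.exp (2 * Real.pi * Complex.I / N)) ^ (j.1 * k.1))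
      = if i = j then (N : ℂ) else 0 := by
  set ω : ℂ := Complex.exp (2 * Real.pi * Complex.I / N) with hωdef
  have hprim : IsPrimitiveRoot ω N := Complex.isPrimitiveRoot_exp N hN.ne'
  have hω0 : ω ≠ 0 := Complex.exp_ne_zero _
  have hconj : (starRingEnd ℂ) ω = ω⁻¹ := by
    rw [hωdef, ← Complex.exp_conj, ← Complex.exp_neg]
    congr 1
    simp [Complex.ext_iff, neg_div]
  set d : ℤ := (j.1 : ℤ) - (i.1 : ℤ) with hddef
  set ζ : ℂ := ω ^ d with hζdef
  have hterm : ∀ k : ℕ, conj (ω ^ (i.1 * k)) * ω ^ (j.1 * k) = ζ ^ k := by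
    intro k
    have : ζ ^ k = ω ^ (d * k) := by
      rw [← zpow_natCast ζ k, hζdef, ← zpow_mul]
    rw [this, hddef, sub_mul, zpow_sub₀ hω0, map_pow, hconj]
    have h1 : ω ^ ((j.1 : ℤ) * (k : ℤ)) = ω ^ (j.1 * k) := by
      rw [show ((j.1 : ℤ) * (k : ℤ)) = ((j.1 * k : ℕ) : ℤ) by push_cast; ring, zpow_natCast]
    have h2 : ω ^ ((i.1 : ℤ) * (k : ℤ)) = ω ^ (i.1 * k) := by
      rw [show ((i.1 : ℤ) * (k : ℤ)) = ((i.1 * k : ℕ) : ℤ) by push_cast; ring, zpow_natCast]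
    rw [h1, h2, div_eq_mul_inv, mul_comm, inv_pow]
  have hsum : ∑ k : Fin N, (conj (ω ^ (i.1 * k.1)) * ω ^ (j.1 * k.1))
      = ∑ k ∈ Finset.range N, ζ ^ k := by
    rw [← Fin.sum_univ_eq_sum_range (fun k => ζ ^ k)]
    exact Finset.sum_congr rfl fun k _ => hterm k.1
  rw [hsum]
  by_cases hij : i = j
  · subst hij
    simp [hζdef, hddef]
  · rw [if_neg hij]
    have hd0 : d ≠ 0 := by
      simp only [hddef, sub_ne_zero]
      exact_mod_cast fun h => hij (Fin.ext (by exact_mod_cast h.symm))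
    have hζ1 : ζ ≠ 1 := by
      intro h
      have hdvd : (N : ℤ) ∣ d := (hprim.zpow_eq_one_iff_dvd d).mp h
      have habs : |d| < (N : ℤ) := by
        have hi := i.isLt; have hj := j.isLt
        rw [hddef, abs_lt]; omega
      exact hd0 (Int.eq_zero_of_abs_lt_dvd hdvd habs)
    have hζN : ζ ^ N = 1 := by
      rw [hζdef, ← zpow_natCast (ω ^ d) N, ← zpow_mul, mul_comm, zpow_mul, zpow_natCast,
        hprim.pow_eq_one, one_zpow]
    rw [geom_sum_eq hζ1, hζN, sub_self, zero_div]

lemma aux_mix {H : Type*} [NormedAddCommGroup H] [InnerProductSpace ℂ H]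
    (P : H →L[ℂ] H) (N : ℕ) (hN : 0 < N) (e : Fin N → H) (he : Orthonormal ℂ e)
    (μ : Fin N → ℝ) (hμ : ∀ k, P (e k) = (μ k : ℂ) • e k) :
    ∃ Φ : Fin N → H, Orthonormal ℂ Φ ∧
      ∀ j, ‖P (Φ j) - Φ j‖ ^ 2 = (∑ k, (μ k - 1) ^ 2) / N := by
  set ω : ℂ := Complex.exp (2 * Real.pi * Complex.I / N) with hωdef
  have hNR : (0 : ℝ) < N := by exact_mod_cast hN
  set c : ℂ := (((Real.sqrt N)⁻¹ : ℝ) : ℂ) with hcdef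
  have hcc : c * c = (N : ℂ)⁻¹ := by
    rw [hcdef]
    rw [← Complex.ofReal_mul, ← mul_inv, Real.mul_self_sqrt hNR.le]
    simp
  have hconjc : conj c = c := Complex.conj_ofReal _
  have habsω : ∀ a : ℕ, ‖ω ^ a‖ = 1 := by
    intro a
    rw [norm_pow, hωdef, Complex.norm_exp]
    have : (2 * Real.pi * Complex.I / N).re = 0 := by
      simp [Complex.div_re]
    rw [this, Real.exp_zero, one_pow]
  refine ⟨fun j => ∑ k, (c * ω ^ (j.1 * k.1)) • e k, ?_, ?_⟩
  · rw [orthonormal_iff_ite]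
    intro i j
    rw [he.inner_sum]
    have : ∑ k : Fin N, conj (c * ω ^ (i.1 * k.1)) * (c * ω ^ (j.1 * k.1))
        = (c * c) * ∑ k : Fin N, (conj (ω ^ (i.1 * k.1)) * ω ^ (j.1 * k.1)) := by
      rw [Finset.mul_sum]
      refine Finset.sum_congr rfl fun k _ => ?_
      rw [map_mul, hconjc]; ring
    rw [this, aux_fourier_sum N hN i j]
    by_cases hij : i = j
    · rw [if_pos hij, if_pos hij, hcc, inv_mul_cancel₀ (by exact_mod_cast hN.ne')]
    · rw [if_neg hij, if_neg hij, mul_zero]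
  · intro j
    have hD : P (∑ k, (c * ω ^ (j.1 * k.1)) • e k) - ∑ k, (c * ω ^ (j.1 * k.1)) • e k
        = ∑ k, (c * ω ^ (j.1 * k.1) * ((μ k : ℂ) - 1)) • e k := by
      rw [map_sum]
      rw [← Finset.sum_sub_distrib]
      refine Finset.sum_congr rfl fun k _ => ?_
      rw [map_smul, hμ k, smul_smul, ← sub_smul]
      ring_nf
    rw [hD]
    have hinner := he.inner_sum (fun k => c * ω ^ (j.1 * k.1) * ((μ k : ℂ) - 1))
      (fun k => c * ω ^ (j.1 * k.1) * ((μ k : ℂ) - 1)) Finset.univ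
    have hsq : (‖∑ k, (c * ω ^ (j.1 * k.1) * ((μ k : ℂ) - 1)) • e k‖ ^ 2 : ℂ)
        = ∑ k : Fin N, conj (c * ω ^ (j.1 * k.1) * ((μ k : ℂ) - 1))
            * (c * ω ^ (j.1 * k.1) * ((μ k : ℂ) - 1)) := by
      rw [← hinner, inner_self_eq_norm_sq_to_K]; rfl
    have hterm : ∀ k : Fin N, conj (c * ω ^ (j.1 * k.1) * ((μ k : ℂ) - 1))
            * (c * ω ^ (j.1 * k.1) * ((μ k : ℂ) - 1))
        = (((μ k - 1) ^ 2 / N : ℝ) : ℂ) := by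
      intro k
      rw [RCLike.conj_mul]
      have h1 : ‖c * ω ^ (j.1 * k.1) * ((μ k : ℂ) - 1)‖ ^ 2 = (μ k - 1) ^ 2 / N := by
        rw [norm_mul, norm_mul]
        have e1 : ‖c‖ = (Real.sqrt N)⁻¹ := by
          rw [hcdef, Complex.norm_real, norm_inv, Real.norm_eq_abs,
            abs_of_nonneg (Real.sqrt_nonneg _)]
        have e2 : ‖ω ^ (j.1 * k.1)‖ = 1 := habsω _
        have e3 : ‖((μ k : ℂ) - 1)‖ = |μ k - 1| := by
          rw [show ((μ k : ℂ) - 1) = ((μ k - 1 : ℝ) : ℂ) by push_cast; ring,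
            Complex.norm_real, Real.norm_eq_abs]
        rw [e1, e2, e3, mul_one, mul_pow, sq_abs, inv_pow, Real.sq_sqrt hNR.le]
        ring
      rw [← h1]
      norm_cast
    have h2 : ((‖∑ k, (c * ω ^ (j.1 * k.1) * ((μ k : ℂ) - 1)) • e k‖ ^ 2 : ℝ) : ℂ)
        = (((∑ k, (μ k - 1) ^ 2) / N : ℝ) : ℂ) := by
      push_cast
      rw [hsq]
      push_cast [Finset.sum_div]
      refine Finset.sum_congr rfl fun k _ => ?_
      rw [hterm k]
      push_cast
      ring
    exact_mod_cast h2

theorem exists_orthonormal_pseudoeigenfunctions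
    {H : Type*} [NormedAddCommGroup H] [InnerProductSpace ℂ H] [CompleteSpace H]
    (P : H →L[ℂ] H) (hsa : IsSelfAdjoint P)
    (hpos : ∀ x : H, 0 ≤ (inner ℂ (P x) x : ℂ).re)
    (hnorm : ‖P‖ ≤ 1)
    (hker : ¬ FiniteDimensional ℂ (LinearMap.ker (P : H →ₗ[ℂ] H)))
    (n : ℕ) (hn : 0 < n)
    (σ ε : ℝ) (hσ : 0 < σ) (hσε : σ ^ 2 ≤ ε) (hε : ε < 1)
    (φ : Fin n → H) (hφ : Orthonormal ℂ φ)
    (lam : Fin n → ℝ) (heig : ∀ k, P (φ k) = (lam k : ℂ) • φ k)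
    (hlam : ∀ k, 1 - σ < lam k ∧ lam k ≤ 1)
    (m : ℕ) (hm : 0 < m)
    (hmγ : (m : ℝ) ≤ n * ((ε - σ ^ 2) / (1 - σ ^ 2))
        / (1 - (ε - σ ^ 2) / (1 - σ ^ 2))) :
    ∃ Φ : Fin (m + n) → H, Orthonormal ℂ Φ ∧
      ∀ j, ‖P (Φ j) - Φ j‖ ^ 2 ≤ ε := by
  classical
  have hσ2 : σ ^ 2 < 1 := lt_of_le_of_lt hσε hε
  have hσ1 : σ < 1 := by nlinarith
  obtain ⟨ψ₀, hψ₀⟩ := aux_exists_orthonormal hker m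
  set ψ : Fin m → H := fun i => ((ψ₀ i : H)) with hψdef
  have hψ : Orthonormal ℂ ψ := hψ₀.comp_linearIsometry (LinearMap.ker (P : H →ₗ[ℂ] H)).subtypeₗᵢ
  have hPψ : ∀ i, P (ψ i) = 0 := fun i => LinearMap.mem_ker.mp (ψ₀ i).2
  have hsym := hsa.isSymmetric
  have hcross : ∀ (b : Fin n) (a : Fin m), (inner ℂ (φ b) (ψ a) : ℂ) = 0 := by
    intro b a
    have h1 : (inner ℂ (P (φ b)) (ψ a) : ℂ) = inner ℂ (φ b) (P (ψ a)) := hsym _ _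
    rw [heig b, hPψ a, inner_zero_right, inner_smul_left] at h1
    have hlb : (lam b : ℂ) ≠ 0 := by
      have h2 := (hlam b).1
      have : lam b ≠ 0 := by intro h; rw [h] at h2; linarith
      exact_mod_cast this
    have hlb' : (starRingEnd ℂ) (lam b : ℂ) ≠ 0 := by
      rw [Complex.conj_ofReal]; exact hlb
    rcases mul_eq_zero.mp h1 with h | h
    · exact absurd h hlb'
    · exact h
  have hcross' : ∀ (a : Fin m) (b : Fin n), (inner ℂ (ψ a) (φ b) : ℂ) = 0 := fun a b => by
    rw [← inner_conj_symm, hcross b a, map_zero]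
  set e : Fin (m + n) → H := Fin.append ψ φ with hedef
  set μ : Fin (m + n) → ℝ := Fin.append (fun _ => 0) lam with hμdef
  have he : Orthonormal ℂ e := by
    rw [orthonormal_iff_ite]
    intro i j
    induction i using Fin.addCases with
    | left a =>
      induction j using Fin.addCases with
      | left b =>
        rw [hedef]
        simp only [Fin.append_left]
        rw [orthonormal_iff_ite.mp hψ a b]
        simp only [Fin.ext_iff, Fin.coe_castAdd]
      | right b =>
        rw [hedef]
        simp only [Fin.append_left, Fin.append_right]
        rw [if_neg (by simp only [Fin.ext_iff, Fin.coe_castAdd, Fin.coe_natAdd]; omega)]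
        exact hcross' a b
    | right a =>
      induction j using Fin.addCases with
      | left b =>
        rw [hedef]
        simp only [Fin.append_left, Fin.append_right]
        rw [if_neg (by simp only [Fin.ext_iff, Fin.coe_castAdd, Fin.coe_natAdd]; omega)]
        exact hcross a b
      | right b =>
        rw [hedef]
        simp only [Fin.append_right]
        rw [orthonormal_iff_ite.mp hφ a b]
        simp only [Fin.ext_iff, Fin.coe_natAdd, add_right_inj]
  have hμe : ∀ k, P (e k) = (μ k : ℂ) • e k := by
    intro k
    induction k using Fin.addCases with
    | left a =>
      rw [hedef, hμdef]
      simp only [Fin.append_left]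
      rw [hPψ a]
      norm_num
    | right a =>
      rw [hedef, hμdef]
      simp only [Fin.append_right]
      exact heig a
  obtain ⟨Φ, hΦo, hΦ⟩ := aux_mix P (m + n) (by omega) e he μ hμe
  refine ⟨Φ, hΦo, fun j => ?_⟩
  rw [hΦ j]
  have hsum : ∑ k : Fin (m + n), (μ k - 1) ^ 2 ≤ m + n * σ ^ 2 := by
    rw [Fin.sum_univ_add]
    have hl : ∑ i : Fin m, (μ (Fin.castAdd n i) - 1) ^ 2 = (m : ℝ) := by
      rw [hμdef]; simp [Fin.append_left]
    have hr : ∑ i : Fin n, (μ (Fin.natAdd m i) - 1) ^ 2 ≤ n * σ ^ 2 := by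
      calc ∑ i : Fin n, (μ (Fin.natAdd m i) - 1) ^ 2
          ≤ ∑ _i : Fin n, σ ^ 2 := by
            refine Finset.sum_le_sum fun i _ => ?_
            rw [hμdef]
            simp only [Fin.append_right]
            have h1 := (hlam i).1
            have h2 := (hlam i).2
            nlinarith
        _ = n * σ ^ 2 := by simp [Finset.sum_const]
    linarith
  have hNpos : (0 : ℝ) < ((m + n : ℕ) : ℝ) := by positivity
  rw [div_le_iff₀ hNpos]
  have hden : (0 : ℝ) < 1 - σ ^ 2 := by linarith
  have hεlt : (0 : ℝ) < 1 - ε := by linarith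
  have key : (m : ℝ) * (1 - ε) ≤ n * (ε - σ ^ 2) := by
    have h1γ : 1 - (ε - σ ^ 2) / (1 - σ ^ 2) = (1 - ε) / (1 - σ ^ 2) := by field_simp; ring
    rw [h1γ] at hmγ
    have h2γ : (n : ℝ) * ((ε - σ ^ 2) / (1 - σ ^ 2)) / ((1 - ε) / (1 - σ ^ 2))
        = n * (ε - σ ^ 2) / (1 - ε) := by
      field_simp
    rw [h2γ] at hmγ
    calc (m : ℝ) * (1 - ε) ≤ (n * (ε - σ ^ 2) / (1 - ε)) * (1 - ε) :=
          mul_le_mul_of_nonneg_right hmγ hεlt.le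
      _ = n * (ε - σ ^ 2) := by
          field_simp
  push_cast
  nlinarith [hsum]
end
end
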